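/- Let G be a simple 1-dof Henneberg-I graph with base non-edge (v1, v2) such that u1 and u2 are the only two vertices constructed directly on (v1, v2). Then (u1, u2) is also a base non-edge for G, i.e., G ∪ {(u1,u2)} is a Henneberg-I graph with base edge (u1,u2). -/

import Mathlib

open SimpleGraph

variable {α : Type*} [DecidableEq α]

/-- Validity of a Henneberg-I construction sequence (list of steps `(v, u, w)` meaning
`v ◁ (u, w)`) starting from the vertex set `S`. -/
def ValidFrom (S : Finset α) : List (α × α × α) → Prop
  | [] => True
  | (v, u, w) :: rest => v ∉ S ∧ u ∈ S ∧ w ∈ S ∧ u ≠ w ∧ ValidFrom (insert v S) rest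

/-- The vertex set built by a Henneberg-I construction from base edge `(a, b)`. -/
def buildVerts (a b : α) (l : List (α × α × α)) : Finset α :=
  l.foldl (fun s p => insert p.1 s) {a, b}

/-- The edge set built by a Henneberg-I construction from base edge `(a, b)`. -/
def buildEdges (a b : α) (l : List (α × α × α)) : Finset (Sym2 α) :=
  l.foldl (fun s p => insert s(p.1, p.2.1) (insert s(p.1, p.2.2) s)) {s(a, b)}

/-- `(V, E)` is a Henneberg-I graph with base edge `(a, b)`. -/
def IsHennebergI (V : Finset α) (E : Finset (Sym2 α)) (a b : α) : Prop :=
  a ≠ b ∧ ∃ l, ValidFrom {a, b} l ∧ V = buildVerts a b l ∧ E = buildEdges a b l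

/-- `(V, E)` is a simple 1-dof Henneberg-I graph with base non-edge `(a, b)`:
adding back the base edge `(a, b)` gives a Henneberg-I graph with base edge `(a, b)`. -/
def IsSimple1Dof (V : Finset α) (E : Finset (Sym2 α)) (a b : α) : Prop :=
  s(a, b) ∉ E ∧ IsHennebergI V (insert s(a, b) E) a b

/-- `(V', E')` is a subgraph of `(V, E)`. -/
def IsSubgraphOf (V : Finset α) (E : Finset (Sym2 α)) (V' : Finset α)
    (E' : Finset (Sym2 α)) : Prop :=
  V' ⊆ V ∧ E' ⊆ E ∧ ∀ e ∈ E', ∀ v ∈ e, v ∈ V'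

/-- `(V, E)` is wellconstrained (Laman): `|E| = 2|V| - 3` and every subgraph on `m`
vertices has at most `2m - 3` edges. -/
def IsLaman (V : Finset α) (E : Finset (Sym2 α)) : Prop :=
  E.card + 3 = 2 * V.card ∧
  ∀ V' E', IsSubgraphOf V E V' E' → E'.card ≤ 2 * V'.card - 3

/-- The degree of the vertex `x` in the edge set `E`. -/
def degreeIn (E : Finset (Sym2 α)) (x : α) : ℕ := (E.filter (fun e => x ∈ e)).card

/-- A step `p = (v, u, w)` is constructed directly on the base pair `(a, b)`. -/
def OnBase (a b : α) (p : α × α × α) : Prop :=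
  (p.2.1 = a ∧ p.2.2 = b) ∨ (p.2.1 = b ∧ p.2.2 = a)

/-- The 1-path property: exactly one vertex other than `a` and `b` has degree 2. -/
def OnePath (V : Finset α) (E : Finset (Sym2 α)) (a b : α) : Prop :=
  ∃! x, x ∈ V ∧ x ≠ a ∧ x ≠ b ∧ degreeIn E x = 2

/-- Triangle-decomposability of a graph `(V, E)`. -/
inductive TriDecomp : Finset α → Finset (Sym2 α) → Prop
  | edge (u v : α) (h : u ≠ v) : TriDecomp {u, v} {s(u, v)}
  | triangle (u v w : α) (huv : u ≠ v) (hvw : v ≠ w) (huw : u ≠ w) :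
      TriDecomp {u, v, w} {s(u, v), s(v, w), s(u, w)}
  | merge (V1 V2 V3 : Finset α) (E1 E2 E3 : Finset (Sym2 α)) (v1 v2 v3 : α)
      (h12 : v1 ≠ v2) (h23 : v2 ≠ v3) (h13 : v1 ≠ v3)
      (t1 : TriDecomp V1 E1) (t2 : TriDecomp V2 E2) (t3 : TriDecomp V3 E3)
      (i12 : V1 ∩ V2 = {v3}) (i23 : V2 ∩ V3 = {v1}) (i13 : V1 ∩ V3 = {v2})
      (e12 : E1 ∩ E2 = ∅) (e23 : E2 ∩ E3 = ∅) (e13 : E1 ∩ E3 = ∅) :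
      TriDecomp (V1 ∪ V2 ∪ V3) (E1 ∪ E2 ∪ E3)

/-- `H` is a minor of `G`: branch-set definition. -/
def HasMinor {V W : Type*} (G : SimpleGraph V) (H : SimpleGraph W) : Prop :=
  ∃ f : W → Set V,
    (∀ w, (f w).Nonempty) ∧
    (∀ w, (G.induce (f w)).Connected) ∧
    (∀ w w', w ≠ w' → Disjoint (f w) (f w')) ∧
    ∀ w w', H.Adj w w' → ∃ x ∈ f w, ∃ y ∈ f w', G.Adj x y


lemma validFrom_nil {S : Finset α} : ValidFrom S ([] : List (α × α × α)) := trivial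

lemma validFrom_cons {S : Finset α} {p : α × α × α} {l : List (α × α × α)} :
    ValidFrom S (p :: l) ↔
      p.1 ∉ S ∧ p.2.1 ∈ S ∧ p.2.2 ∈ S ∧ p.2.1 ≠ p.2.2 ∧ ValidFrom (insert p.1 S) l := by
  obtain ⟨v, u, w⟩ := p
  rfl

lemma valid_firsts_not_mem {S : Finset α} {l : List (α × α × α)} (h : ValidFrom S l) :
    ∀ p ∈ l, p.1 ∉ S := by
  induction l generalizing S with
  | nil => simp
  | cons q l ih =>
    rw [validFrom_cons] at h
    intro p hp
    rcases List.mem_cons.mp hp with rfl | hp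
    · exact h.1
    · intro hpS
      exact ih h.2.2.2.2 p hp (Finset.mem_insert_of_mem hpS)

lemma valid_first_inj {S : Finset α} {l : List (α × α × α)} (h : ValidFrom S l) :
    ∀ p ∈ l, ∀ q ∈ l, p.1 = q.1 → p = q := by
  induction l generalizing S with
  | nil => simp
  | cons r l ih =>
    rw [validFrom_cons] at h
    have hnm := valid_firsts_not_mem h.2.2.2.2
    intro p hp q hq he
    rcases List.mem_cons.mp hp with h1 | h1 <;> rcases List.mem_cons.mp hq with h2 | h2
    · rw [h1, h2]
    · exfalso; exact hnm q h2 (by rw [← he, h1]; exact Finset.mem_insert_self _ _)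
    · exfalso; exact hnm p h1 (by rw [he, h2]; exact Finset.mem_insert_self _ _)
    · exact ih h.2.2.2.2 p h1 q h2 he

def stepEdges (l : List (α × α × α)) : Finset (Sym2 α) :=
  l.foldr (fun p s => insert s(p.1, p.2.1) (insert s(p.1, p.2.2) s)) ∅

lemma foldl_edges (E0 : Finset (Sym2 α)) (l : List (α × α × α)) :
    l.foldl (fun s p => insert s(p.1, p.2.1) (insert s(p.1, p.2.2) s)) E0
      = E0 ∪ stepEdges l := by
  induction l generalizing E0 with
  | nil => simp [stepEdges]
  | cons p l ih =>
    simp only [List.foldl_cons, ih, stepEdges, List.foldr_cons]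
    ext e
    simp only [Finset.mem_union, Finset.mem_insert]
    tauto

lemma mem_stepEdges {e : Sym2 α} {l : List (α × α × α)} :
    e ∈ stepEdges l ↔ ∃ p ∈ l, e = s(p.1, p.2.1) ∨ e = s(p.1, p.2.2) := by
  induction l with
  | nil => simp [stepEdges]
  | cons p l ih =>
    simp only [stepEdges, List.foldr_cons, Finset.mem_insert, List.mem_cons]
    rw [show (List.foldr (fun p s => insert s(p.1, p.2.1) (insert s(p.1, p.2.2) s)) ∅ l) = stepEdges l from rfl, ih]
    constructor
    · rintro (rfl | rfl | ⟨q, hq, h⟩)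
      · exact ⟨p, Or.inl rfl, Or.inl rfl⟩
      · exact ⟨p, Or.inl rfl, Or.inr rfl⟩
      · exact ⟨q, Or.inr hq, h⟩
    · rintro ⟨q, (rfl | hq), h⟩
      · tauto
      · exact Or.inr (Or.inr ⟨q, hq, h⟩)

lemma foldl_verts (S : Finset α) (l : List (α × α × α)) :
    l.foldl (fun s p => insert p.1 s) S = S ∪ (l.map Prod.fst).toFinset := by
  induction l generalizing S with
  | nil => simp
  | cons p l ih =>
    simp only [List.foldl_cons, ih, List.map_cons, List.toFinset_cons]
    ext x
    simp only [Finset.mem_union, Finset.mem_insert]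
    tauto

lemma valid_filter {P : α × α × α → Prop} [DecidablePred P] :
    ∀ {S T : Finset α} {l : List (α × α × α)}, ValidFrom S l → S ⊆ T →
      (∀ p ∈ l, if P p then p.1 ∉ T else p.1 ∈ T) →
      ValidFrom T (l.filter (fun p => P p)) := by
  intro S T l
  induction l generalizing S T with
  | nil => intro _ _ _; exact trivial
  | cons q l ih =>
    intro h hST hcond
    rw [validFrom_cons] at h
    obtain ⟨hq, hu, hw, huw, hrest⟩ := h
    have hcq := hcond q (List.mem_cons_self)
    by_cases hP : P q
    · rw [List.filter_cons_of_pos (by simpa using hP), validFrom_cons]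
      simp only [hP, if_true] at hcq
      refine ⟨hcq, hST hu, hST hw, huw, ?_⟩
      apply ih hrest (Finset.insert_subset_insert _ hST)
      intro p hp
      have hc := hcond p (List.mem_cons_of_mem _ hp)
      have hpq : p.1 ∉ insert q.1 S := valid_firsts_not_mem hrest p hp
      by_cases h2 : P p <;> simp only [h2, if_true, if_false] at hc ⊢
      · simp only [Finset.mem_insert, not_or]
        exact ⟨fun e => hpq (e ▸ Finset.mem_insert_self _ _), hc⟩
      · exact Finset.mem_insert_of_mem hc
    · rw [List.filter_cons_of_neg (by simpa using hP)]
      simp only [hP, if_false] at hcq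
      exact ih hrest (Finset.insert_subset hcq hST)
        (fun p hp => hcond p (List.mem_cons_of_mem _ hp))

lemma mem_buildEdges {a b : α} {e : Sym2 α} {l : List (α × α × α)} :
    e ∈ buildEdges a b l ↔ e = s(a, b) ∨ ∃ p ∈ l, e = s(p.1, p.2.1) ∨ e = s(p.1, p.2.2) := by
  rw [buildEdges, foldl_edges]
  simp [mem_stepEdges]

lemma mem_buildVerts {a b x : α} {l : List (α × α × α)} :
    x ∈ buildVerts a b l ↔ x = a ∨ x = b ∨ ∃ p ∈ l, p.1 = x := by
  rw [buildVerts, foldl_verts]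
  simp [or_assoc, eq_comm]


/-- If `u1` and `u2` are the only two vertices constructed directly on the
base pair `(v1, v2)`, then `(u1, u2)` is also a base non-edge for `G`, i.e.
`G ∪ {(u1, u2)}` is a Henneberg-I graph with base edge `(u1, u2)`. -/
theorem stmt14 (v1 v2 : α) (hab : v1 ≠ v2) (l : List (α × α × α))
    (hl : ValidFrom {v1, v2} l)
    (V : Finset α) (E : Finset (Sym2 α))
    (hV : V = buildVerts v1 v2 l) (hE : E = (buildEdges v1 v2 l).erase s(v1, v2))
    (u1 u2 : α) (hu : u1 ≠ u2)
    (hu1 : ∃ p ∈ l, p.1 = u1 ∧ OnBase v1 v2 p)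
    (hu2 : ∃ p ∈ l, p.1 = u2 ∧ OnBase v1 v2 p)
    (honly : ∀ p ∈ l, OnBase v1 v2 p → p.1 = u1 ∨ p.1 = u2) :
    IsSimple1Dof V E u1 u2 := by
  obtain ⟨p1, hp1l, hp1u, hp1b⟩ := hu1
  obtain ⟨p2, hp2l, hp2u, hp2b⟩ := hu2
  have hnm := valid_firsts_not_mem hl
  have hinj := valid_first_inj hl
  have hu1v : u1 ≠ v1 ∧ u1 ≠ v2 := by
    have := hnm p1 hp1l; rw [hp1u] at this; simpa [not_or] using this
  have hu2v : u2 ≠ v1 ∧ u2 ≠ v2 := by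
    have := hnm p2 hp2l; rw [hp2u] at this; simpa [not_or] using this
  -- uniqueness of the steps with first coordinate u1 / u2
  have huniq1 : ∀ p ∈ l, p.1 = u1 → p = p1 := fun p hp hpu =>
    hinj p hp p1 hp1l (by rw [hpu, hp1u])
  have huniq2 : ∀ p ∈ l, p.1 = u2 → p = p2 := fun p hp hpu =>
    hinj p hp p2 hp2l (by rw [hpu, hp2u])
  -- the new construction list
  set rest : List (α × α × α) := l.filter (fun p => p.1 ≠ u1 ∧ p.1 ≠ u2) with hrest_def
  set l' : List (α × α × α) := (v1, u1, u2) :: (v2, u1, u2) :: rest with hl'_def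
  have hmem_rest : ∀ p, p ∈ rest ↔ p ∈ l ∧ p.1 ≠ u1 ∧ p.1 ≠ u2 := by
    intro p; simp [hrest_def, List.mem_filter]
  -- s(u1, u2) is not an edge
  have hnotE : s(u1, u2) ∉ E := by
    rw [hE]
    intro h
    have h2 := Finset.mem_of_mem_erase h
    rw [mem_buildEdges] at h2
    rcases h2 with h2 | ⟨p, hpl, hor⟩
    · rw [Sym2.eq_iff] at h2
      rcases h2 with ⟨h3, _⟩ | ⟨h3, _⟩
      · exact hu1v.1 h3
      · exact hu1v.2 h3
    · rcases hor with hor | hor <;> rw [Sym2.eq_iff] at hor <;>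
        rcases hor with ⟨h3, h4⟩ | ⟨h3, h4⟩
      · have := huniq1 p hpl h3.symm
        subst this
        rcases hp1b with ⟨ha, _⟩ | ⟨ha, _⟩
        · rw [ha] at h4; exact hu2v.1 h4
        · rw [ha] at h4; exact hu2v.2 h4
      · have := huniq2 p hpl h4.symm
        subst this
        rcases hp2b with ⟨ha, _⟩ | ⟨ha, _⟩
        · rw [ha] at h3; exact hu1v.1 h3
        · rw [ha] at h3; exact hu1v.2 h3
      · have := huniq1 p hpl h3.symm
        subst this
        rcases hp1b with ⟨_, ha⟩ | ⟨_, ha⟩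
        · rw [ha] at h4; exact hu2v.2 h4
        · rw [ha] at h4; exact hu2v.1 h4
      · have := huniq2 p hpl h4.symm
        subst this
        rcases hp2b with ⟨_, ha⟩ | ⟨_, ha⟩
        · rw [ha] at h3; exact hu1v.2 h3
        · rw [ha] at h3; exact hu1v.1 h3
  refine ⟨hnotE, hu, l', ?_, ?_, ?_⟩
  · -- validity
    rw [hl'_def, validFrom_cons]
    refine ⟨by simp [hu1v.1.symm, hu2v.1.symm], by simp, by simp, hu, ?_⟩
    rw [validFrom_cons]
    refine ⟨by simp [hab.symm, hu1v.2.symm, hu2v.2.symm], by simp, by simp, hu, ?_⟩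
    simp only
    apply valid_filter hl
    · intro x hx
      simp only [Finset.mem_insert, Finset.mem_singleton] at hx
      rcases hx with rfl | rfl <;> simp
    · intro p hp
      by_cases hP : p.1 ≠ u1 ∧ p.1 ≠ u2
      · rw [if_pos hP]
        have := hnm p hp
        simp only [Finset.mem_insert, Finset.mem_singleton, not_or] at this ⊢
        exact ⟨this.2, this.1, hP.1, hP.2⟩
      · rw [if_neg hP]
        rcases not_and_or.mp hP with h | h <;> rw [not_not] at h <;> simp [h]
  · -- vertex sets agree
    rw [hV]
    ext x
    rw [mem_buildVerts, mem_buildVerts]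
    constructor
    · rintro (h | h | ⟨p, hpl, hpx⟩)
      · exact Or.inr (Or.inr ⟨(v1, u1, u2), by simp [hl'_def], h.symm⟩)
      · exact Or.inr (Or.inr ⟨(v2, u1, u2), by simp [hl'_def], h.symm⟩)
      · by_cases h1 : p.1 = u1
        · exact Or.inl (hpx ▸ h1.symm ▸ rfl)
        · by_cases h2 : p.1 = u2
          · exact Or.inr (Or.inl (hpx ▸ h2.symm ▸ rfl))
          · refine Or.inr (Or.inr ⟨p, ?_, hpx⟩)
            simp only [hl'_def, List.mem_cons]
            exact Or.inr (Or.inr ((hmem_rest p).mpr ⟨hpl, h1, h2⟩))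
    · rintro (h | h | ⟨p, hpl, hpx⟩)
      · exact Or.inr (Or.inr ⟨p1, hp1l, h ▸ hp1u⟩)
      · exact Or.inr (Or.inr ⟨p2, hp2l, h ▸ hp2u⟩)
      · simp only [hl'_def, List.mem_cons] at hpl
        rcases hpl with rfl | rfl | hpl
        · exact Or.inl hpx.symm
        · exact Or.inr (Or.inl hpx.symm)
        · exact Or.inr (Or.inr ⟨p, ((hmem_rest p).mp hpl).1, hpx⟩)
  · -- edge sets agree
    rw [hE]
    ext e
    rw [mem_buildEdges]
    simp only [Finset.mem_insert, Finset.mem_erase, mem_buildEdges]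
    constructor
    · rintro (rfl | ⟨hne, (rfl | ⟨p, hpl, hor⟩)⟩)
      · exact Or.inl rfl
      · exact absurd rfl hne
      · by_cases h1 : p.1 = u1
        · have := huniq1 p hpl h1; subst this
          refine Or.inr ?_
          rcases hp1b with ⟨ha, hb⟩ | ⟨ha, hb⟩ <;> rcases hor with rfl | rfl
          · exact ⟨(v1, u1, u2), by simp [hl'_def],
              Or.inl (by rw [hp1u, ha, Sym2.eq_swap])⟩
          · exact ⟨(v2, u1, u2), by simp [hl'_def],
              Or.inl (by rw [hp1u, hb, Sym2.eq_swap])⟩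
          · exact ⟨(v2, u1, u2), by simp [hl'_def],
              Or.inl (by rw [hp1u, ha, Sym2.eq_swap])⟩
          · exact ⟨(v1, u1, u2), by simp [hl'_def],
              Or.inl (by rw [hp1u, hb, Sym2.eq_swap])⟩
        · by_cases h2 : p.1 = u2
          · have := huniq2 p hpl h2; subst this
            refine Or.inr ?_
            rcases hp2b with ⟨ha, hb⟩ | ⟨ha, hb⟩ <;> rcases hor with rfl | rfl
            · exact ⟨(v1, u1, u2), by simp [hl'_def],
                Or.inr (by rw [hp2u, ha, Sym2.eq_swap])⟩
            · exact ⟨(v2, u1, u2), by simp [hl'_def],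
                Or.inr (by rw [hp2u, hb, Sym2.eq_swap])⟩
            · exact ⟨(v2, u1, u2), by simp [hl'_def],
                Or.inr (by rw [hp2u, ha, Sym2.eq_swap])⟩
            · exact ⟨(v1, u1, u2), by simp [hl'_def],
                Or.inr (by rw [hp2u, hb, Sym2.eq_swap])⟩
          · refine Or.inr ⟨p, ?_, hor⟩
            simp only [hl'_def, List.mem_cons]
            exact Or.inr (Or.inr ((hmem_rest p).mpr ⟨hpl, h1, h2⟩))
    · rintro (rfl | ⟨p, hpl, hor⟩)
      · exact Or.inl rfl
      · simp only [hl'_def, List.mem_cons] at hpl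
        have hv1ne : ∀ y u : α, (y = v1 ∨ y = v2) → (u = u1 ∨ u = u2) →
            s(y, u) ≠ s(v1, v2) := by
          rintro y u hy hu' h
          rw [Sym2.eq_iff] at h
          rcases h with ⟨_, h2⟩ | ⟨_, h2⟩ <;> rcases hu' with rfl | rfl
          · exact hu1v.2 h2
          · exact hu2v.2 h2
          · exact hu1v.1 h2
          · exact hu2v.1 h2
        rcases hpl with rfl | rfl | hpl
        · simp only at hor
          rcases hor with rfl | rfl
          · refine Or.inr ⟨hv1ne _ _ (Or.inl rfl) (Or.inl rfl), Or.inr ⟨p1, hp1l, ?_⟩⟩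
            rcases hp1b with ⟨ha, _⟩ | ⟨_, hb⟩
            · exact Or.inl (by rw [hp1u, ha, Sym2.eq_swap])
            · exact Or.inr (by rw [hp1u, hb, Sym2.eq_swap])
          · refine Or.inr ⟨hv1ne _ _ (Or.inl rfl) (Or.inr rfl), Or.inr ⟨p2, hp2l, ?_⟩⟩
            rcases hp2b with ⟨ha, _⟩ | ⟨_, hb⟩
            · exact Or.inl (by rw [hp2u, ha, Sym2.eq_swap])
            · exact Or.inr (by rw [hp2u, hb, Sym2.eq_swap])
        · simp only at hor
          rcases hor with rfl | rfl
          · refine Or.inr ⟨hv1ne _ _ (Or.inr rfl) (Or.inl rfl), Or.inr ⟨p1, hp1l, ?_⟩⟩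
            rcases hp1b with ⟨_, hb⟩ | ⟨ha, _⟩
            · exact Or.inr (by rw [hp1u, hb, Sym2.eq_swap])
            · exact Or.inl (by rw [hp1u, ha, Sym2.eq_swap])
          · refine Or.inr ⟨hv1ne _ _ (Or.inr rfl) (Or.inr rfl), Or.inr ⟨p2, hp2l, ?_⟩⟩
            rcases hp2b with ⟨_, hb⟩ | ⟨ha, _⟩
            · exact Or.inr (by rw [hp2u, hb, Sym2.eq_swap])
            · exact Or.inl (by rw [hp2u, ha, Sym2.eq_swap])
        · obtain ⟨hpl', _, _⟩ := (hmem_rest p).mp hpl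
          refine Or.inr ⟨?_, Or.inr ⟨p, hpl', hor⟩⟩
          have hp1v : p.1 ∉ ({v1, v2} : Finset α) := hnm p hpl'
          simp only [Finset.mem_insert, Finset.mem_singleton, not_or] at hp1v
          rcases hor with rfl | rfl <;> intro h <;> rw [Sym2.eq_iff] at h <;>
            rcases h with ⟨h3, _⟩ | ⟨h3, _⟩
          · exact hp1v.1 h3
          · exact hp1v.2 h3
          · exact hp1v.1 h3
          · exact hp1v.2 h3
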